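/- Let (Ω, 𝔽, P) be a probability space, let ψ ∈ Ψ(∞), and let ζ be a random variable with 0 < ‖ζ‖_{Gψ} < ∞, where ‖ζ‖_{Gψ} = sup_{p ≥ 1} |ζ|_{L_p(P)}/ψ(p). Define v_ψ(p) = p·ln ψ(p) and its Legendre (Young–Fenchel) transform v_ψ*(x) = sup_{p ≥ 1} (p·x − v_ψ(p)). Then for all y ≥ e·‖ζ‖_{Gψ}, P(|ζ| > y) ≤ exp( −v_ψ*( ln( y/‖ζ‖_{Gψ} ) ) ). -/

import Mathlib

open MeasureTheory ENNReal

/-- The Grand Lebesgue Space norm `‖ζ‖_{Gψ} = sup_{p ≥ 1} |ζ|_{L_p(P)} / ψ(p)`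
(for `ψ ∈ Ψ(∞)`). -/
noncomputable def glsNormInf {Ω : Type*} [MeasurableSpace Ω] (P : Measure Ω)
    (ψ : ℝ → ℝ) (ζ : Ω → ℝ) : ℝ≥0∞ :=
  ⨆ (p : ℝ) (_ : 1 ≤ p), eLpNorm ζ (ENNReal.ofReal p) P / ENNReal.ofReal (ψ p)

/-- The Legendre (Young–Fenchel) transform `v_ψ*(x) = sup_{p ≥ 1} (p·x − v_ψ(p))` of
`v_ψ(p) = p·ln ψ(p)`, with values in the extended reals. -/
noncomputable def legendreVPsi (ψ : ℝ → ℝ) (x : ℝ) : EReal :=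
  ⨆ (p : ℝ) (_ : 1 ≤ p), ((p * x - p * Real.log (ψ p) : ℝ) : EReal)

/-- **Tail estimate (2.2).**  Let `(Ω, 𝔽, P)` be a probability space, `ψ ∈ Ψ(∞)`, and
`ζ` a random variable with `0 < ‖ζ‖_{Gψ} < ∞`.  With `v_ψ(p) = p·ln ψ(p)` and its
Legendre transform `v_ψ*(x) = sup_{p ≥ 1}(p·x − v_ψ(p))`, one has, for all
`y ≥ e·‖ζ‖_{Gψ}`, the bound `P(|ζ| > y) ≤ exp(−v_ψ*(ln(y/‖ζ‖_{Gψ})))`. -/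
theorem gls_tail_estimate
    {Ω : Type*} [MeasurableSpace Ω] (P : Measure Ω) [IsProbabilityMeasure P]
    (ψ : ℝ → ℝ) (hψcont : ContinuousOn ψ (Set.Ici (1 : ℝ)))
    (hψpos : ∃ c : ℝ, 0 < c ∧ ∀ p : ℝ, 1 ≤ p → c ≤ ψ p)
    (ζ : Ω → ℝ) (hζm : Measurable ζ)
    (hpos : 0 < glsNormInf P ψ ζ) (hfin : glsNormInf P ψ ζ < ⊤) :
    ∀ y : ℝ, Real.exp 1 * (glsNormInf P ψ ζ).toReal ≤ y →
      P {ω | y < |ζ ω|} ≤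
        EReal.exp (-(legendreVPsi ψ (Real.log (y / (glsNormInf P ψ ζ).toReal)))) := by
  intro y hy
  set A := {ω | y < |ζ ω|} with hA
  set N := glsNormInf P ψ ζ with hN
  set G := N.toReal with hG
  set x := Real.log (y / G) with hx
  have hG0 : 0 < G := ENNReal.toReal_pos hpos.ne' hfin.ne
  have hy0 : 0 < y := lt_of_lt_of_le (by positivity) hy
  obtain ⟨c, hc0, hc⟩ := hψpos
  have key : ∀ p : ℝ, 1 ≤ p →
      P A ≤ ENNReal.ofReal (Real.exp (-(p * x - p * Real.log (ψ p)))) := by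
    intro p hp
    have hp0 : 0 < p := lt_of_lt_of_le one_pos hp
    have hψp : 0 < ψ p := lt_of_lt_of_le hc0 (hc p hp)
    have hq0 : ENNReal.ofReal p ≠ 0 := by simp [ENNReal.ofReal_eq_zero, not_le, hp0]
    have hqt : ENNReal.ofReal p ≠ ⊤ := ENNReal.ofReal_ne_top
    have hε0 : (ENNReal.ofReal y) ≠ 0 := by simp [ENNReal.ofReal_eq_zero, not_le, hy0]
    have hsub : P A ≤ P {ω | ENNReal.ofReal y ≤ ‖ζ ω‖₊} := by
      apply measure_mono
      intro ω hω
      simp only [hA, Set.mem_setOf_eq] at hω ⊢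
      calc ENNReal.ofReal y ≤ ENNReal.ofReal |ζ ω| := ENNReal.ofReal_le_ofReal hω.le
        _ = ‖ζ ω‖₊ := by rw [← Real.norm_eq_abs]; exact ofReal_norm (ζ ω)
    have hmarkov := meas_ge_le_mul_pow_eLpNorm_enorm (μ := P) hq0 hqt
        hζm.aestronglyMeasurable hε0 (by simp) (f := ζ)
    have hnorm : eLpNorm ζ (ENNReal.ofReal p) P ≤ N * ENNReal.ofReal (ψ p) := by
      have h1 : eLpNorm ζ (ENNReal.ofReal p) P / ENNReal.ofReal (ψ p) ≤ N := by
        rw [hN, glsNormInf]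
        exact le_iSup₂ (f := fun (p : ℝ) (_ : 1 ≤ p) =>
          eLpNorm ζ (ENNReal.ofReal p) P / ENNReal.ofReal (ψ p)) p hp
      rwa [ENNReal.div_le_iff (by simp [ENNReal.ofReal_eq_zero, not_le, hψp])
        ENNReal.ofReal_ne_top] at h1
    have htr : (ENNReal.ofReal p).toReal = p := ENNReal.toReal_ofReal hp0.le
    have hNG : N = ENNReal.ofReal G := (ENNReal.ofReal_toReal hfin.ne).symm
    have hbound : P A ≤ ((ENNReal.ofReal y)⁻¹ * (N * ENNReal.ofReal (ψ p))) ^ p := by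
      calc P A ≤ P {ω | ENNReal.ofReal y ≤ ‖ζ ω‖₊} := hsub
        _ ≤ (ENNReal.ofReal y)⁻¹ ^ (ENNReal.ofReal p).toReal *
            eLpNorm ζ (ENNReal.ofReal p) P ^ (ENNReal.ofReal p).toReal := hmarkov
        _ ≤ (ENNReal.ofReal y)⁻¹ ^ p * (N * ENNReal.ofReal (ψ p)) ^ p := by
            rw [htr]
            exact mul_le_mul_right (ENNReal.rpow_le_rpow hnorm hp0.le) _
        _ = ((ENNReal.ofReal y)⁻¹ * (N * ENNReal.ofReal (ψ p))) ^ p := by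
            simp [ENNReal.mul_rpow_of_nonneg _ _ hp0.le]
    have hinner : (ENNReal.ofReal y)⁻¹ * (N * ENNReal.ofReal (ψ p)) =
        ENNReal.ofReal (y⁻¹ * (G * ψ p)) := by
      rw [hNG, ← ENNReal.ofReal_inv_of_pos hy0, ← ENNReal.ofReal_mul hG0.le,
        ← ENNReal.ofReal_mul (by positivity)]
    have ht0 : 0 < y⁻¹ * (G * ψ p) := by positivity
    have hrpow : ENNReal.ofReal (y⁻¹ * (G * ψ p)) ^ p =
        ENNReal.ofReal ((y⁻¹ * (G * ψ p)) ^ p) := ENNReal.ofReal_rpow_of_pos ht0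
    have hexp : (y⁻¹ * (G * ψ p)) ^ p = Real.exp (-(p * x - p * Real.log (ψ p))) := by
      rw [Real.rpow_def_of_pos ht0, hx, Real.log_div hy0.ne' hG0.ne',
        Real.log_mul (by positivity) (by positivity), Real.log_mul hG0.ne' hψp.ne',
        Real.log_inv]
      ring_nf
    calc P A ≤ ((ENNReal.ofReal y)⁻¹ * (N * ENNReal.ofReal (ψ p))) ^ p := hbound
      _ = ENNReal.ofReal (Real.exp (-(p * x - p * Real.log (ψ p)))) := by
          rw [hinner, hrpow, hexp]
  have hlog : ∀ p : ℝ, 1 ≤ p →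
      ((p * x - p * Real.log (ψ p) : ℝ) : EReal) ≤ -ENNReal.log (P A) := by
    intro p hp
    have h := ENNReal.log_monotone (key p hp)
    rw [show ENNReal.ofReal (Real.exp (-(p * x - p * Real.log (ψ p)))) =
        EReal.exp ((-(p * x - p * Real.log (ψ p)) : ℝ) : EReal) from rfl,
      EReal.log_exp] at h
    rw [EReal.coe_neg] at h
    exact EReal.le_neg_of_le_neg h
  have h1 : legendreVPsi ψ x ≤ -ENNReal.log (P A) := by
    rw [legendreVPsi]
    exact iSup₂_le hlog
  have h2 : ENNReal.log (P A) ≤ -legendreVPsi ψ x := EReal.le_neg_of_le_neg h1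
  calc P A = EReal.exp (ENNReal.log (P A)) := (ENNReal.exp_log _).symm
    _ ≤ EReal.exp (-legendreVPsi ψ x) := EReal.exp_monotone h2
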